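/- Let Γ be a group acting on a set S with finitely many orbits, such that every stabilizer Γ_s (s ∈ S) is finitely generated as a group. Then the free abelian group Z[S] on S, with its induced Z[Γ]-module structure, is a finitely presented Z[Γ]-module. -/

import Mathlib

open Finsupp MulAction Representation

namespace Stmt11Aux

variable {Γ : Type} [Group Γ] {S : Type} [MulAction Γ S]

lemma smul_single (g : Γ) (n : ℤ) (x : S) :
    (MonoidAlgebra.single g n : MonoidAlgebra ℤ Γ) •
      ((ofMulAction ℤ Γ S).asModuleEquiv.symm (MonoidAlgebra.single x 1)) =
      (ofMulAction ℤ Γ S).asModuleEquiv.symm (MonoidAlgebra.single (g • x) n) := by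
  apply (ofMulAction ℤ Γ S).asModuleEquiv.injective
  rw [Representation.asModuleEquiv_map_smul]
  simp [Representation.asAlgebraHom_single, Representation.ofMulAction_single,
    Finsupp.smul_single]

lemma mem_ideal (T : Set Γ) {h : Γ} (hh : h ∈ Subgroup.closure T) :
    MonoidAlgebra.single h (1:ℤ) - 1 ∈
      Submodule.span (MonoidAlgebra ℤ Γ)
        ((fun t => MonoidAlgebra.single t (1:ℤ) - 1) '' T) := by
  set I := Submodule.span (MonoidAlgebra ℤ Γ)
        ((fun t => MonoidAlgebra.single t (1:ℤ) - 1) '' T) with hI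
  induction hh using Subgroup.closure_induction with
  | mem x hx => exact Submodule.subset_span ⟨x, hx, rfl⟩
  | one => simp [MonoidAlgebra.one_def]
  | mul x y hx hy ihx ihy =>
      have : MonoidAlgebra.single (x * y) (1:ℤ) - 1 =
          (MonoidAlgebra.single x (1:ℤ)) • (MonoidAlgebra.single y (1:ℤ) - 1)
            + (MonoidAlgebra.single x (1:ℤ) - 1) := by
        simp [smul_eq_mul, mul_sub, MonoidAlgebra.single_mul_single]
      rw [this]
      exact I.add_mem (I.smul_mem _ ihy) ihx
  | inv x hx ihx =>
      have : MonoidAlgebra.single x⁻¹ (1:ℤ) - 1 =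
          -((MonoidAlgebra.single x⁻¹ (1:ℤ)) • (MonoidAlgebra.single x (1:ℤ) - 1)) := by
        simp [smul_eq_mul, mul_sub, MonoidAlgebra.single_mul_single, MonoidAlgebra.one_def]
      rw [this]
      exact I.neg_mem (I.smul_mem _ ihx)

end Stmt11Aux

/-- Let `Γ` act on a set `S` with finitely many orbits and finitely generated
stabilizers.  Then the permutation module `ℤ[S]` is a finitely presented
`ℤ[Γ]`-module. -/
theorem stmt_11 {Γ : Type} [Group Γ] {S : Type} [MulAction Γ S]
    (horb : Finite (Quotient (MulAction.orbitRel Γ S)))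
    (hstab : ∀ s : S, Group.FG (MulAction.stabilizer Γ s)) :
    Module.FinitePresentation (MonoidAlgebra ℤ Γ)
      (Representation.ofMulAction ℤ Γ S).asModule := by
  classical
  set R := MonoidAlgebra ℤ Γ with hRdef
  set Q := Quotient (MulAction.orbitRel Γ S) with hQdef
  set ρ := Representation.ofMulAction ℤ Γ S with hρdef
  set e := ρ.asModuleEquiv with hedef
  -- choice of section σ : S → Γ with σ x • (⟦x⟧.out) = x
  have hsec : ∀ x : S, ∃ g : Γ, g • ((Quotient.mk (MulAction.orbitRel Γ S) x).out) = x := by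
    intro x
    have h1 : (Quotient.mk (MulAction.orbitRel Γ S)
        ((Quotient.mk (MulAction.orbitRel Γ S) x).out)) =
        Quotient.mk (MulAction.orbitRel Γ S) x := Quotient.out_eq _
    have h2 := Quotient.eq.mp h1
    rw [MulAction.orbitRel_apply, MulAction.mem_orbit_iff] at h2
    obtain ⟨g, hg⟩ := h2
    exact ⟨g⁻¹, by rw [← hg, inv_smul_smul]⟩
  choose σ hσ using hsec
  -- mk of smul
  have hmk : ∀ (g : Γ) (x : S), Quotient.mk (MulAction.orbitRel Γ S) (g • x)
      = Quotient.mk (MulAction.orbitRel Γ S) x := by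
    intro g x
    exact Quotient.sound (MulAction.orbitRel_apply.mpr (MulAction.mem_orbit x g))
  -- generating sets of stabilizers
  have hgen : ∀ q : Q, ∃ T : Set Γ, T.Finite ∧
      Subgroup.closure T = MulAction.stabilizer Γ q.out := by
    intro q
    have := (Group.fg_iff_subgroup_fg (MulAction.stabilizer Γ q.out)).mp (hstab _)
    obtain ⟨T, hT, hTfin⟩ := (Subgroup.fg_iff _).mp this
    exact ⟨T, hTfin, hT⟩
  choose T hTfin hTcl using hgen
  -- the free module and the surjection
  set v : Q → ρ.asModule := fun q => e.symm (MonoidAlgebra.single q.out 1) with hvdef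
  set l : (Q →₀ R) →ₗ[R] ρ.asModule := Finsupp.linearCombination R v with hldef
  have hl1 : ∀ (q : Q) (g : Γ) (n : ℤ),
      l (Finsupp.single q (MonoidAlgebra.single g n)) = e.symm (MonoidAlgebra.single (g • q.out) n) := by
    intro q g n
    rw [hldef, Finsupp.linearCombination_single]
    exact Stmt11Aux.smul_single g n q.out
  have hsurj : Function.Surjective l := by
    have key : ∀ f : MonoidAlgebra ℤ S, e.symm f ∈ LinearMap.range l := by
      intro f
      induction f using MonoidAlgebra.induction with
      | zero => simpa using (LinearMap.range l).zero_mem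
      | single_add x n f _ _ ih =>
          rw [map_add]
          refine (LinearMap.range l).add_mem ?_ ih
          refine ⟨Finsupp.single (Quotient.mk (MulAction.orbitRel Γ S) x)
            (MonoidAlgebra.single (σ x) n), ?_⟩
          rw [hl1, hσ]
    intro m
    obtain ⟨y, hy⟩ := key (e m)
    exact ⟨y, by simpa using hy⟩
  -- the relation submodule
  set gens : Set (Q →₀ R) := ⋃ q : Q,
    (fun t => Finsupp.single q (MonoidAlgebra.single t (1:ℤ) - 1)) '' (T q) with hgensdef
  have hgensfin : gens.Finite := Set.finite_iUnion (fun q => (hTfin q).image _)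
  set K : Submodule R (Q →₀ R) := Submodule.span R gens with hKdef
  -- K ≤ ker l
  have hKker : K ≤ LinearMap.ker l := by
    rw [hKdef, Submodule.span_le]
    intro x hx
    obtain ⟨q, hq⟩ := Set.mem_iUnion.mp hx
    obtain ⟨t, ht, rfl⟩ := hq
    have hts : t • q.out = q.out := by
      have : t ∈ MulAction.stabilizer Γ q.out := by
        rw [← hTcl q]; exact Subgroup.subset_closure ht
      exact this
    have hsplit : (Finsupp.single q (MonoidAlgebra.single t (1:ℤ) - 1) : Q →₀ R)
        = Finsupp.single q (MonoidAlgebra.single t (1:ℤ))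
          - Finsupp.single q (MonoidAlgebra.single (1:Γ) (1:ℤ)) := by
      rw [← Finsupp.single_sub, MonoidAlgebra.one_def]
    simp only [SetLike.mem_coe, LinearMap.mem_ker]
    rw [hsplit, map_sub, hl1, hl1, hts, one_smul, sub_self]
  -- elementwise: single q a ∈ K for a in the stabilizer ideal
  have hsingleK : ∀ (q : Q) (a : R),
      a ∈ Submodule.span R ((fun t => MonoidAlgebra.single t (1:ℤ) - 1) '' (T q)) →
      Finsupp.single q a ∈ K := by
    intro q a ha
    induction ha using Submodule.span_induction with
    | mem y hy =>
        obtain ⟨t, ht, rfl⟩ := hy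
        exact Submodule.subset_span (Set.mem_iUnion.mpr ⟨q, ⟨t, ht, rfl⟩⟩)
    | zero => simpa using K.zero_mem
    | add y z _ _ ihy ihz => rw [Finsupp.single_add]; exact K.add_mem ihy ihz
    | smul r y _ ihy => rw [← Finsupp.smul_single]; exact K.smul_mem r ihy
  -- key relations in K
  have hC : ∀ (q : Q) (g : Γ),
      Finsupp.single q (MonoidAlgebra.single g (1:ℤ)
        - MonoidAlgebra.single (σ (g • q.out)) 1) ∈ K := by
    intro q g
    set x := g • q.out with hx
    have hqx : Quotient.mk (MulAction.orbitRel Γ S) x = q := by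
      rw [hx, hmk]; exact Quotient.out_eq q
    have hσx : σ x • q.out = x := by
      have := hσ x; rwa [hqx] at this
    have hstabmem : (σ x)⁻¹ * g ∈ Subgroup.closure (T q) := by
      rw [hTcl q]
      have : ((σ x)⁻¹ * g) • q.out = q.out := by
        rw [mul_smul, ← hx, inv_smul_eq_iff]
        exact hσx.symm
      exact this
    have hI := Stmt11Aux.mem_ideal (T q) hstabmem
    have hfac : MonoidAlgebra.single g (1:ℤ) - MonoidAlgebra.single (σ x) 1
        = (MonoidAlgebra.single (σ x) (1:ℤ)) •
            (MonoidAlgebra.single ((σ x)⁻¹ * g) (1:ℤ) - 1) := by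
      rw [smul_eq_mul, mul_sub, MonoidAlgebra.single_mul_single, mul_one,
        mul_inv_cancel_left, mul_one]
    rw [hfac]
    exact hsingleK q _ (Submodule.smul_mem _ _ hI)
  -- the inverse map into the quotient
  set ψ : MonoidAlgebra ℤ S →ₗ[ℤ] ((Q →₀ R) ⧸ K) := (Finsupp.linearCombination ℤ
    (fun x : S => Submodule.mkQ K (Finsupp.single (Quotient.mk (MulAction.orbitRel Γ S) x)
      (MonoidAlgebra.single (σ x) (1:ℤ))))) ∘ₗ (MonoidAlgebra.coeffLinearEquiv ℤ).toLinearMap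
    with hψdef
  have hE1 : ∀ (q : Q) (g : Γ) (n : ℤ),
      ψ (e (l (Finsupp.single q (MonoidAlgebra.single g n)))) =
        Submodule.mkQ K (Finsupp.single q (MonoidAlgebra.single g n)) := by
    intro q g n
    rw [hl1, LinearEquiv.apply_symm_apply, hψdef, LinearMap.comp_apply, LinearEquiv.coe_coe,
      MonoidAlgebra.coeffLinearEquiv_apply, MonoidAlgebra.coeff_single,
      Finsupp.linearCombination_single]
    set x := g • q.out with hx
    have hqx : Quotient.mk (MulAction.orbitRel Γ S) x = q := by
      rw [hx, hmk]; exact Quotient.out_eq q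
    rw [hqx, ← map_zsmul (Submodule.mkQ K)]
    rw [← sub_eq_zero, ← map_sub (Submodule.mkQ K)]
    rw [Submodule.mkQ_apply, Submodule.Quotient.mk_eq_zero]
    have key2 : (n • (Finsupp.single q (MonoidAlgebra.single (σ x) (1:ℤ)) : Q →₀ R))
        - Finsupp.single q (MonoidAlgebra.single g n)
        = -(n • (Finsupp.single q (MonoidAlgebra.single g (1:ℤ)
            - MonoidAlgebra.single (σ x) 1) : Q →₀ R)) := by
      rw [← Int.cast_smul_eq_zsmul ℤ n, ← Int.cast_smul_eq_zsmul ℤ n]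
      simp only [Int.cast_id, Finsupp.smul_single, smul_sub, Finsupp.single_sub, smul_eq_mul,
        mul_one, neg_sub, MonoidAlgebra.smul_single']
      congr 1
      rw [MonoidAlgebra.smul_single', mul_one]
    rw [key2]
    exact neg_mem (zsmul_mem (hC q g) n)
  have hE : ∀ y : Q →₀ R, ψ (e (l y)) = Submodule.mkQ K y := by
    have hsingle : ∀ (q : Q) (r : R), ψ (e (l (Finsupp.single q r)))
        = Submodule.mkQ K (Finsupp.single q r) := by
      intro q r
      induction r using MonoidAlgebra.induction with
      | zero => simp
      | single_add g n f _ _ ih =>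
          rw [Finsupp.single_add, map_add, map_add, map_add, ih, map_add, hE1]
    intro y
    induction y using Finsupp.induction with
    | zero => simp
    | single_add q r f _ _ ih =>
        rw [map_add, map_add, map_add, ih, map_add, hsingle]
  -- the kernel is K
  have hker : LinearMap.ker l = K := by
    refine le_antisymm ?_ hKker
    intro y hy
    have h1 := hE y
    rw [LinearMap.mem_ker.mp hy, map_zero, map_zero] at h1
    exact (Submodule.Quotient.mk_eq_zero K).mp (by rw [← Submodule.mkQ_apply, ← h1])
  haveI : Finite Q := horb
  refine Module.finitePresentation_of_free_of_surjective l hsurj ?_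
  rw [hker, hKdef]
  exact Submodule.fg_def.mpr ⟨gens, hgensfin, rfl⟩
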